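/- Let X and Y be real Banach spaces and N an absolute normalized norm on ℝ² with property (α). Then Z = X ⊕_N Y has no Daugavet points: for every (x,y) ∈ S_Z there exist ε > 0 and a point (w,0) or (0,w) in S_Z that is not in cl conv{(u,v) ∈ B_Z : ‖(x,y) − (u,v)‖_N ≥ 2 − ε}. -/

import Mathlib

section auxN

variable (N : ℝ × ℝ → ℝ)
  (Ntri : ∀ u v : ℝ × ℝ, N (u + v) ≤ N u + N v)
  (Nhom : ∀ (t : ℝ) (u : ℝ × ℝ), N (t • u) = |t| * N u)
  (Nabs : ∀ s t : ℝ, N (s, t) = N (|s|, |t|))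

include Ntri Nhom Nabs in
theorem auxMono1 : ∀ a a' b : ℝ, 0 ≤ a → a ≤ a' → N (a, b) ≤ N (a', b) := by
  intro a a' b ha haa'
  rcases eq_or_lt_of_le (ha.trans haa') with h | h
  · have : a = a' := le_antisymm haa' (h ▸ ha)
    rw [this]
  · set t : ℝ := (a' + a) / (2 * a') with ht
    have ht0 : 0 ≤ t := by positivity
    have ht1 : t ≤ 1 := by rw [ht, div_le_one (by linarith)]; linarith
    have key : ((a : ℝ), b) = t • ((a' : ℝ), b) + (1 - t) • (-a', b) := by
      have h1 : t * a' + (1 - t) * (-a') = a := by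
        have htt : t * (2 * a') = a' + a := by
          rw [ht]; exact div_mul_cancel₀ _ (by linarith : (0:ℝ) < 2 * a').ne'
        linear_combination htt
      have h2 : t * b + (1 - t) * b = b := by ring
      simp only [Prod.smul_mk, Prod.mk_add_mk, smul_eq_mul]
      exact Prod.ext h1.symm h2.symm
    calc N (a, b) = N (t • ((a' : ℝ), b) + (1 - t) • (-a', b)) := by rw [← key]
      _ ≤ N (t • ((a' : ℝ), b)) + N ((1 - t) • (-a', b)) := Ntri _ _
      _ = t * N (a', b) + (1 - t) * N (-a', b) := by
          rw [Nhom, Nhom, abs_of_nonneg ht0, abs_of_nonneg (by linarith)]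
      _ = t * N (a', b) + (1 - t) * N (a', b) := by
          rw [Nabs (-a') b, abs_neg, ← Nabs a' b]
      _ = N (a', b) := by ring

include Ntri Nhom Nabs in
theorem auxMono2 : ∀ a b b' : ℝ, 0 ≤ b → b ≤ b' → N (a, b) ≤ N (a, b') := by
  intro a b b' hb hbb'
  rcases eq_or_lt_of_le (hb.trans hbb') with h | h
  · have : b = b' := le_antisymm hbb' (h ▸ hb)
    rw [this]
  · set t : ℝ := (b' + b) / (2 * b') with ht
    have ht0 : 0 ≤ t := by positivity
    have ht1 : t ≤ 1 := by rw [ht, div_le_one (by linarith)]; linarith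
    have key : ((a : ℝ), b) = t • ((a : ℝ), b') + (1 - t) • (a, -b') := by
      have h1 : t * b' + (1 - t) * (-b') = b := by
        have htt : t * (2 * b') = b' + b := by
          rw [ht]; exact div_mul_cancel₀ _ (by linarith : (0:ℝ) < 2 * b').ne'
        linear_combination htt
      have h2 : t * a + (1 - t) * a = a := by ring
      simp only [Prod.smul_mk, Prod.mk_add_mk, smul_eq_mul]
      exact Prod.ext h2.symm h1.symm
    calc N (a, b) = N (t • ((a : ℝ), b') + (1 - t) • (a, -b')) := by rw [← key]
      _ ≤ N (t • ((a : ℝ), b')) + N ((1 - t) • (a, -b')) := Ntri _ _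
      _ = t * N (a, b') + (1 - t) * N (a, -b') := by
          rw [Nhom, Nhom, abs_of_nonneg ht0, abs_of_nonneg (by linarith)]
      _ = t * N (a, b') + (1 - t) * N (a, b') := by
          rw [Nabs a (-b'), abs_neg, ← Nabs a b']
      _ = N (a, b') := by ring

include Ntri Nhom Nabs in
theorem auxMono : ∀ a a' b b' : ℝ, 0 ≤ a → a ≤ a' → 0 ≤ b → b ≤ b' →
    N (a, b) ≤ N (a', b') := by
  intro a a' b b' ha haa' hb hbb'
  exact (auxMono1 N Ntri Nhom Nabs a a' b ha haa').trans
    (auxMono2 N Ntri Nhom Nabs a' b b' hb hbb')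

end auxN

/-- If `N` is an absolute normalized norm on `ℝ²` with property (α), then
`Z = X ⊕_N Y` has no Daugavet points: for every `z ∈ S_Z` there are `ε > 0`
and a point of `S_Z` of the form `(w, 0)` or `(0, w)` that is not in the
closed convex hull of `Δ_ε(z)`. -/
theorem stmt_14 {X Y Z : Type*}
    [NormedAddCommGroup X] [NormedSpace ℝ X] [Nontrivial X]
    [NormedAddCommGroup Y] [NormedSpace ℝ Y] [Nontrivial Y]
    [NormedAddCommGroup Z] [NormedSpace ℝ Z]
    (N : ℝ × ℝ → ℝ)
    -- `N` is a norm on `ℝ²`: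
    (Ntri : ∀ u v : ℝ × ℝ, N (u + v) ≤ N u + N v)
    (Nhom : ∀ (t : ℝ) (u : ℝ × ℝ), N (t • u) = |t| * N u)
    (Ndef : ∀ u : ℝ × ℝ, N u = 0 → u = 0)
    -- `N` is absolute and normalized:
    (Nabs : ∀ s t : ℝ, N (s, t) = N (|s|, |t|))
    (Nnorm₁ : N (1, 0) = 1) (Nnorm₂ : N (0, 1) = 1)
    -- `N` has property (α):
    (Nalpha : ∀ c d : ℝ, 0 ≤ c → 0 ≤ d → N (c, d) = 1 →
      ∃ ε > (0 : ℝ), ∃ W : Set (ℝ × ℝ), W ∈ nhds (c, d) ∧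
        (∀ a b : ℝ, 0 ≤ a → 0 ≤ b → N (a, b) = 1 →
          2 - ε ≤ N ((a, b) + (c, d)) → (a, b) ∈ W) ∧
        ((∃ s < (1 : ℝ), ∀ p ∈ W, p.1 ≤ s) ∨ (∃ s < (1 : ℝ), ∀ p ∈ W, p.2 ≤ s)))
    -- `Z = X ⊕_N Y`:
    (e : Z ≃ₗ[ℝ] X × Y)
    (he : ∀ z : Z, ‖z‖ = N (‖(e z).1‖, ‖(e z).2‖)) :
    ∀ z : Z, ‖z‖ = 1 →
      ∃ ε > (0 : ℝ), ∃ v : Z, ‖v‖ = 1 ∧ ((e v).2 = 0 ∨ (e v).1 = 0) ∧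
        v ∉ closure (convexHull ℝ {w : Z | ‖w‖ ≤ 1 ∧ 2 - ε ≤ ‖z - w‖}) := by
  have mono := auxMono N Ntri Nhom Nabs
  -- the coordinate "projections" are bounded by the norm
  have hfst : ∀ u : Z, ‖(e u).1‖ ≤ ‖u‖ := by
    intro u
    rw [he u]
    have h0 : N (‖(e u).1‖, 0) = ‖(e u).1‖ := by
      have := Nhom ‖(e u).1‖ (1, 0)
      simp only [Prod.smul_mk, smul_eq_mul, mul_one, mul_zero] at this
      rw [this, Nnorm₁, abs_of_nonneg (norm_nonneg _), mul_one]
    calc ‖(e u).1‖ = N (‖(e u).1‖, 0) := h0.symm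
      _ ≤ N (‖(e u).1‖, ‖(e u).2‖) :=
        mono _ _ _ _ (norm_nonneg _) le_rfl le_rfl (norm_nonneg _)
  have hsnd : ∀ u : Z, ‖(e u).2‖ ≤ ‖u‖ := by
    intro u
    rw [he u]
    have h0 : N (0, ‖(e u).2‖) = ‖(e u).2‖ := by
      have := Nhom ‖(e u).2‖ (0, 1)
      simp only [Prod.smul_mk, smul_eq_mul, mul_one, mul_zero] at this
      rw [this, Nnorm₂, abs_of_nonneg (norm_nonneg _), mul_one]
    calc ‖(e u).2‖ = N (0, ‖(e u).2‖) := h0.symm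
      _ ≤ N (‖(e u).1‖, ‖(e u).2‖) :=
        mono _ _ _ _ le_rfl (norm_nonneg _) (norm_nonneg _) le_rfl
  intro z hz
  set c := ‖(e z).1‖ with hc
  set d := ‖(e z).2‖ with hd
  have hcd : N (c, d) = 1 := by rw [← he z]; exact hz
  obtain ⟨ε, hε, W, hW, hWmem, hWsup⟩ :=
    Nalpha c d (norm_nonneg _) (norm_nonneg _) hcd
  refine ⟨ε, hε, ?_⟩
  -- normalization: every point of Δ_ε(z) gives a point of W after scaling
  have hkey : ∀ u : Z, u ≠ 0 → ‖u‖ ≤ 1 → 2 - ε ≤ ‖z - u‖ →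
      (‖u‖⁻¹ * ‖(e u).1‖, ‖u‖⁻¹ * ‖(e u).2‖) ∈ W := by
    intro u hu0 hu h2
    set a := ‖(e u).1‖ with ha
    set b := ‖(e u).2‖ with hb
    have h0 : (0 : ℝ) < ‖u‖ := norm_pos_iff.mpr hu0
    have hru : N (a, b) = ‖u‖ := (he u).symm
    have h2' : 2 - ε ≤ N (a + c, b + d) := by
      refine h2.trans ?_
      rw [he (z - u)]
      have e1 : ‖(e (z - u)).1‖ ≤ c + a := by
        rw [map_sub]
        exact norm_sub_le _ _
      have e2 : ‖(e (z - u)).2‖ ≤ d + b := by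
        rw [map_sub]
        exact norm_sub_le _ _
      exact mono ‖(e (z - u)).1‖ (a + c) ‖(e (z - u)).2‖ (b + d)
        (norm_nonneg _) (by linarith) (norm_nonneg _) (by linarith)
    set a' := ‖u‖⁻¹ * a with ha'
    set b' := ‖u‖⁻¹ * b with hb'
    have ha0 : 0 ≤ a := norm_nonneg _
    have hb0 : 0 ≤ b := norm_nonneg _
    have hinv : (1 : ℝ) ≤ ‖u‖⁻¹ := one_le_inv_iff₀.mpr ⟨h0, hu⟩
    have haa' : a ≤ a' := by
      rw [ha']
      nlinarith
    have hbb' : b ≤ b' := by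
      rw [hb']
      nlinarith
    have hN' : N (a', b') = 1 := by
      have := Nhom ‖u‖⁻¹ (a, b)
      simp only [Prod.smul_mk, smul_eq_mul] at this
      rw [ha', hb', this, abs_of_nonneg (le_of_lt (inv_pos.mpr h0)), hru,
        inv_mul_cancel₀ (ne_of_gt h0)]
    have h2'' : 2 - ε ≤ N ((a', b') + (c, d)) := by
      refine h2'.trans ?_
      rw [Prod.mk_add_mk]
      exact mono _ _ _ _ (by positivity) (by linarith) (by positivity) (by linarith)
    exact hWmem a' b' (by positivity) (by positivity) hN' h2''
  have hCD : (c, d) ∈ W := mem_of_mem_nhds hW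
  rcases hWsup with ⟨s, hs1, hsW⟩ | ⟨s, hs1, hsW⟩
  · -- first coordinate bounded on W
    have hs0 : (0 : ℝ) ≤ s := le_trans (norm_nonneg _) (hsW (c, d) hCD)
    -- the separating set
    set S : Set Z := {u : Z | ‖(e u).1‖ ≤ s} with hS
    have hbound : ∀ u : Z, ‖u‖ ≤ 1 → 2 - ε ≤ ‖z - u‖ → u ∈ S := by
      intro u hu h2
      rcases eq_or_ne u 0 with rfl | hu0
      · simp only [hS, Set.mem_setOf_eq, map_zero]
        simpa using hs0
      · have hmem := hkey u hu0 hu h2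
        have hle := hsW _ hmem
        simp only at hle
        have h0 : (0 : ℝ) < ‖u‖ := norm_pos_iff.mpr hu0
        have hinv : (1 : ℝ) ≤ ‖u‖⁻¹ := one_le_inv_iff₀.mpr ⟨h0, hu⟩
        have ha0 : (0 : ℝ) ≤ ‖(e u).1‖ := norm_nonneg _
        simp only [hS, Set.mem_setOf_eq]
        nlinarith
    have hSconv : Convex ℝ S := by
      intro u hu v hv p q hp hq hpq
      simp only [hS, Set.mem_setOf_eq] at *
      have heq : (e (p • u + q • v)).1 = p • (e u).1 + q • (e v).1 := by
        simp [map_add, map_smul]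
      rw [heq]
      calc ‖p • (e u).1 + q • (e v).1‖ ≤ ‖p • (e u).1‖ + ‖q • (e v).1‖ :=
            norm_add_le _ _
        _ = p * ‖(e u).1‖ + q * ‖(e v).1‖ := by
            rw [norm_smul, norm_smul, Real.norm_eq_abs, Real.norm_eq_abs,
              abs_of_nonneg hp, abs_of_nonneg hq]
        _ ≤ p * s + q * s := by
            gcongr
        _ = s := by rw [← add_mul, hpq, one_mul]
    have hScl : IsClosed S := by
      have hlip : LipschitzWith 1 (fun u : Z => ‖(e u).1‖) := by
        apply LipschitzWith.of_dist_le_mul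
        intro u v
        rw [Real.dist_eq, dist_eq_norm, NNReal.coe_one, one_mul]
        calc |‖(e u).1‖ - ‖(e v).1‖| ≤ ‖(e u).1 - (e v).1‖ :=
              abs_norm_sub_norm_le _ _
          _ = ‖(e (u - v)).1‖ := by simp [map_sub]
          _ ≤ ‖u - v‖ := hfst _
      exact isClosed_le hlip.continuous continuous_const
    -- the witness
    obtain ⟨x, hx⟩ := exists_ne (0 : X)
    have hxn : ‖(‖x‖⁻¹ • x : X)‖ = 1 := by
      rw [norm_smul, norm_inv, norm_norm, inv_mul_cancel₀ (norm_ne_zero_iff.mpr hx)]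
    refine ⟨e.symm (‖x‖⁻¹ • x, 0), ?_, ?_, ?_⟩
    · rw [he, e.apply_symm_apply]
      simp only [norm_zero]
      rw [hxn, Nnorm₁]
    · left
      rw [e.apply_symm_apply]
    · intro hmem
      have hsub : closure (convexHull ℝ {w : Z | ‖w‖ ≤ 1 ∧ 2 - ε ≤ ‖z - w‖}) ⊆ S :=
        closure_minimal (convexHull_min (fun u hu => hbound u hu.1 hu.2) hSconv) hScl
      have := hsub hmem
      simp only [hS, Set.mem_setOf_eq, e.apply_symm_apply] at this
      rw [hxn] at this
      linarith
  · -- second coordinate bounded on W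
    have hs0 : (0 : ℝ) ≤ s := le_trans (norm_nonneg _) (hsW (c, d) hCD)
    set S : Set Z := {u : Z | ‖(e u).2‖ ≤ s} with hS
    have hbound : ∀ u : Z, ‖u‖ ≤ 1 → 2 - ε ≤ ‖z - u‖ → u ∈ S := by
      intro u hu h2
      rcases eq_or_ne u 0 with rfl | hu0
      · simp only [hS, Set.mem_setOf_eq, map_zero]
        simpa using hs0
      · have hmem := hkey u hu0 hu h2
        have hle := hsW _ hmem
        simp only at hle
        have h0 : (0 : ℝ) < ‖u‖ := norm_pos_iff.mpr hu0
        have hinv : (1 : ℝ) ≤ ‖u‖⁻¹ := one_le_inv_iff₀.mpr ⟨h0, hu⟩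
        have ha0 : (0 : ℝ) ≤ ‖(e u).2‖ := norm_nonneg _
        simp only [hS, Set.mem_setOf_eq]
        nlinarith
    have hSconv : Convex ℝ S := by
      intro u hu v hv p q hp hq hpq
      simp only [hS, Set.mem_setOf_eq] at *
      have heq : (e (p • u + q • v)).2 = p • (e u).2 + q • (e v).2 := by
        simp [map_add, map_smul]
      rw [heq]
      calc ‖p • (e u).2 + q • (e v).2‖ ≤ ‖p • (e u).2‖ + ‖q • (e v).2‖ :=
            norm_add_le _ _
        _ = p * ‖(e u).2‖ + q * ‖(e v).2‖ := by
            rw [norm_smul, norm_smul, Real.norm_eq_abs, Real.norm_eq_abs,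
              abs_of_nonneg hp, abs_of_nonneg hq]
        _ ≤ p * s + q * s := by
            gcongr
        _ = s := by rw [← add_mul, hpq, one_mul]
    have hScl : IsClosed S := by
      have hlip : LipschitzWith 1 (fun u : Z => ‖(e u).2‖) := by
        apply LipschitzWith.of_dist_le_mul
        intro u v
        rw [Real.dist_eq, dist_eq_norm, NNReal.coe_one, one_mul]
        calc |‖(e u).2‖ - ‖(e v).2‖| ≤ ‖(e u).2 - (e v).2‖ :=
              abs_norm_sub_norm_le _ _
          _ = ‖(e (u - v)).2‖ := by simp [map_sub]
          _ ≤ ‖u - v‖ := hsnd _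
      exact isClosed_le hlip.continuous continuous_const
    obtain ⟨y, hy⟩ := exists_ne (0 : Y)
    have hyn : ‖(‖y‖⁻¹ • y : Y)‖ = 1 := by
      rw [norm_smul, norm_inv, norm_norm, inv_mul_cancel₀ (norm_ne_zero_iff.mpr hy)]
    refine ⟨e.symm (0, ‖y‖⁻¹ • y), ?_, ?_, ?_⟩
    · rw [he, e.apply_symm_apply]
      simp only [norm_zero]
      rw [hyn, Nnorm₂]
    · right
      rw [e.apply_symm_apply]
    · intro hmem
      have hsub : closure (convexHull ℝ {w : Z | ‖w‖ ≤ 1 ∧ 2 - ε ≤ ‖z - w‖}) ⊆ S :=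
        closure_minimal (convexHull_min (fun u hu => hbound u hu.1 hu.2) hSconv) hScl
      have := hsub hmem
      simp only [hS, Set.mem_setOf_eq, e.apply_symm_apply] at this
      rw [hyn] at this
      linarith
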